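/- Let H ∈ ℝ^{p×p} be symmetric positive definite. The iteration matrix of one symmetrized pass of coordinate descent (coordinates 1 to p then p down to 1), T^{CD-sym} = (Id - (e_1e_1ᵀ/H_{11})H)⋯(Id - (e_pe_pᵀ/H_{pp})H)(Id - (e_pe_pᵀ/H_{pp})H)⋯(Id - (e_1e_1ᵀ/H_{11})H), satisfies T^{CD-sym} = H^{-1/2} S H^{1/2} where S = M Mᵀ with M = (Id - H^{1/2}(e_1e_1ᵀ/H_{11})H^{1/2})⋯(Id - H^{1/2}(e_pe_pᵀ/H_{pp})H^{1/2}); in particular S is symmetric positive semidefinite. -/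

import Mathlib

open Matrix

open scoped ComplexOrder in
/-- The square root of a positive semidefinite matrix, as defined in Mathlib (Dec 2024). -/
noncomputable def Matrix.PosSemidef.sqrt {n : Type*} [Fintype n] [DecidableEq n] {𝕜 : Type*}
    [RCLike 𝕜] {A : Matrix n n 𝕜} (hA : A.PosSemidef) : Matrix n n 𝕜 :=
  hA.1.eigenvectorUnitary.1 * diagonal ((↑) ∘ (√·) ∘ hA.1.eigenvalues) *
    (star hA.1.eigenvectorUnitary : Matrix n n 𝕜)

/-- The single-coordinate iteration matrix `Id - (e_j e_jᵀ / H_{jj}) H`. -/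
noncomputable def cdFactor {p : ℕ} (H : Matrix (Fin p) (Fin p) ℝ) (j : Fin p) :
    Matrix (Fin p) (Fin p) ℝ :=
  1 - (H j j)⁻¹ • (Matrix.single j j 1 * H)

/-- The projection factor `Id - H^{1/2}(e_j e_jᵀ/H_{jj})H^{1/2}`. -/
noncomputable def projFactor {p : ℕ} {H : Matrix (Fin p) (Fin p) ℝ} (hH : H.PosDef)
    (j : Fin p) : Matrix (Fin p) (Fin p) ℝ :=
  1 - (H j j)⁻¹ • (hH.posSemidef.sqrt * Matrix.single j j 1 * hH.posSemidef.sqrt)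

theorem sqrt_isHermitian_real {n : Type*} [Fintype n] [DecidableEq n]
    {A : Matrix n n ℝ} (hA : A.PosSemidef) : hA.sqrtᵀ = hA.sqrt := by
  unfold Matrix.PosSemidef.sqrt
  simp only [Matrix.transpose_mul, Matrix.diagonal_transpose, Matrix.star_eq_conjTranspose,
    Matrix.conjTranspose_eq_transpose_of_trivial, Matrix.transpose_transpose, Matrix.mul_assoc]

theorem sqrt_mul_self_real {n : Type*} [Fintype n] [DecidableEq n]
    {A : Matrix n n ℝ} (hA : A.PosSemidef) : hA.sqrt * hA.sqrt = A := by
  unfold Matrix.PosSemidef.sqrt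
  have hU : (star hA.1.eigenvectorUnitary : Matrix n n ℝ) * (hA.1.eigenvectorUnitary : Matrix n n ℝ)
      = 1 := Unitary.coe_star_mul_self _
  conv_rhs => rw [hA.1.spectral_theorem, Unitary.conjStarAlgAut_apply]
  rw [show ∀ a b c d e f : Matrix n n ℝ, a * b * c * (d * e * f) = a * (b * (c * d) * e) * f by
    intros; simp only [Matrix.mul_assoc], hU, Matrix.mul_one, diagonal_mul_diagonal]
  congr 3
  ext i
  simp [Real.mul_self_sqrt (hA.eigenvalues_nonneg i)]

/-- The iteration matrix of one symmetrized pass of coordinate descent (coordinates `1` to `p`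
then `p` down to `1`) equals `H^{-1/2} S H^{1/2}` with `S = M Mᵀ` symmetric positive
semidefinite, where `M = (Id - H^{1/2}(e_1e_1ᵀ/H_{11})H^{1/2}) ⋯ (Id - H^{1/2}(e_pe_pᵀ/H_{pp})H^{1/2})`. -/
theorem stmt_10 {p : ℕ} (H : Matrix (Fin p) (Fin p) ℝ) (hH : H.PosDef) :
    (((List.finRange p).map (cdFactor H)).prod *
        ((List.finRange p).reverse.map (cdFactor H)).prod =
      (hH.posSemidef.sqrt)⁻¹ *
        (((List.finRange p).map (projFactor hH)).prod *
          (((List.finRange p).map (projFactor hH)).prod)ᵀ) * hH.posSemidef.sqrt) ∧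
    (((List.finRange p).map (projFactor hH)).prod *
      (((List.finRange p).map (projFactor hH)).prod)ᵀ).PosSemidef := by
  set R := hH.posSemidef.sqrt with hR
  have hRsym : Rᵀ = R := by
    have := sqrt_isHermitian_real hH.posSemidef
    simpa [Matrix.IsHermitian, Matrix.conjTranspose] using this
  have hRR : R * R = H := sqrt_mul_self_real hH.posSemidef
  have hdet : IsUnit R.det := by
    have hHdet : H.det ≠ 0 := hH.det_pos.ne'
    have : R.det * R.det = H.det := by rw [← Matrix.det_mul, hRR]
    exact isUnit_iff_ne_zero.mpr fun h => hHdet (by rw [← this, h, mul_zero])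
  have hRiR : R⁻¹ * R = 1 := Matrix.nonsing_inv_mul R hdet
  have hRRi : R * R⁻¹ = 1 := Matrix.mul_nonsing_inv R hdet
  -- key conjugation identity
  have hconj : ∀ j, cdFactor H j = R⁻¹ * projFactor hH j * R := by
    intro j
    simp only [cdFactor, projFactor, Matrix.mul_sub, Matrix.sub_mul, Matrix.mul_one,
      Matrix.one_mul, Matrix.mul_smul, Matrix.smul_mul, hRiR]
    congr 1
    rw [show R⁻¹ * (R * Matrix.single j j 1 * R) * R
        = (R⁻¹ * R) * Matrix.single j j 1 * (R * R) by noncomm_ring,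
      hRiR, hRR, Matrix.one_mul]
  -- products of conjugates
  have hprod : ∀ l : List (Fin p),
      (l.map (cdFactor H)).prod = R⁻¹ * (l.map (projFactor hH)).prod * R := by
    intro l
    induction l with
    | nil => simp [hRiR]
    | cons a t ih =>
        simp only [List.map_cons, List.prod_cons, ih, hconj a]
        rw [show R⁻¹ * projFactor hH a * R * (R⁻¹ * (t.map (projFactor hH)).prod * R)
            = R⁻¹ * projFactor hH a * (R * R⁻¹) * (t.map (projFactor hH)).prod * R by
          noncomm_ring, hRRi]
        noncomm_ring
  -- projFactor is symmetric
  have hstd : ∀ j : Fin p, (Matrix.single j j (1:ℝ))ᵀ = Matrix.single j j 1 := by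
    intro j
    ext a b
    simp [Matrix.single, Matrix.transpose_apply, and_comm]
  have hsym : ∀ j, (projFactor hH j)ᵀ = projFactor hH j := by
    intro j
    simp [projFactor, Matrix.transpose_sub, Matrix.transpose_smul, Matrix.transpose_mul,
      hRsym, hstd, ← hR, Matrix.mul_assoc]
  set M := ((List.finRange p).map (projFactor hH)).prod with hM
  have hMT : Mᵀ = ((List.finRange p).reverse.map (projFactor hH)).prod := by
    rw [hM, Matrix.transpose_list_prod]
    simp only [List.map_reverse, List.map_map]
    congr 2
    exact List.map_congr_left fun j _ => hsym j
  constructor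
  · rw [hprod, hprod, ← hM, ← hMT]
    rw [show R⁻¹ * M * R * (R⁻¹ * Mᵀ * R) = R⁻¹ * M * (R * R⁻¹) * Mᵀ * R by noncomm_ring,
      hRRi]
    noncomm_ring
  · have h := Matrix.posSemidef_self_mul_conjTranspose M
    rwa [Matrix.conjTranspose_eq_transpose_of_trivial] at h
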